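/- Let N ≥ 2 be an even integer and let D be a real-valued function on pairs of 2^N × 2^N complex matrices that is contractive under quantum channels. Then for all p, q ∈ [0,1] with p + q ≤ 1 and all h ∈ [0,1): D(ω(p,q,h), ω(p,q,0)) = D(ω(1/3,1/3,h), ω(1/3,1/3,0)). -/

import Mathlib

open Matrix BigOperators Polynomial
open scoped ComplexOrder

/-- The three Pauli matrices. -/
noncomputable def pauli : Fin 3 → Matrix (Fin 2) (Fin 2) ℂ :=
  ![!![0, 1; 1, 0], !![0, -Complex.I; Complex.I, 0], !![1, 0; 0, -1]]

/-- The `N`-fold Kronecker power of a 2×2 matrix, with rows and columns indexed by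
`Fin N → Fin 2` (the `N`-qubit computational basis). -/
noncomputable def kronPow (A : Matrix (Fin 2) (Fin 2) ℂ) (N : ℕ) :
    Matrix (Fin N → Fin 2) (Fin N → Fin 2) ℂ :=
  Matrix.of fun i j => ∏ k, A (i k) (j k)

/-- The `M³_N` state `ϖ(c) = 2^{-N} (I + c₁ σ₁^{⊗N} + c₂ σ₂^{⊗N} + c₃ σ₃^{⊗N})`. -/
noncomputable def Mstate (N : ℕ) (c : Fin 3 → ℝ) :
    Matrix (Fin N → Fin 2) (Fin N → Fin 2) ℂ :=
  ((2 : ℂ) ^ N)⁻¹ • (1 + ∑ j : Fin 3, (c j : ℂ) • kronPow (pauli j) N)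


/-- A quantum channel on `2^N × 2^N` complex matrices: a map admitting a Kraus
representation `Φ(ρ) = Σᵢ Aᵢ ρ Aᵢ†` with `Σᵢ Aᵢ† Aᵢ = I`. -/
def IsQuantumChannel (N : ℕ)
    (Φ : Matrix (Fin N → Fin 2) (Fin N → Fin 2) ℂ → Matrix (Fin N → Fin 2) (Fin N → Fin 2) ℂ) :
    Prop :=
  ∃ (m : ℕ) (A : Fin m → Matrix (Fin N → Fin 2) (Fin N → Fin 2) ℂ),
    (∑ i, (A i)ᴴ * A i = 1) ∧ ∀ ρ, Φ ρ = ∑ i, A i * ρ * (A i)ᴴ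

/-- `D` is contractive under quantum channels. -/
def Contractive (N : ℕ)
    (D : Matrix (Fin N → Fin 2) (Fin N → Fin 2) ℂ → Matrix (Fin N → Fin 2) (Fin N → Fin 2) ℂ → ℝ) :
    Prop :=
  ∀ Φ, IsQuantumChannel N Φ →
    ∀ ρ σ : Matrix (Fin N → Fin 2) (Fin N → Fin 2) ℂ, D (Φ ρ) (Φ σ) ≤ D ρ σ

/-- The `M³_N` state `ω(p,q,h)` with correlation triple
`p·V₁(h) + q·V₂(h) + (1−p−q)·V₃(h)`, where `V₁(h) = (−h, (−1)^{N/2} h, −1)`,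
`V₂(h) = (−h, (−1)^{N/2}, −h)`, `V₃(h) = (−1, (−1)^{N/2} h, −h)`. -/
noncomputable def omegaState (N : ℕ) (p q h : ℝ) :
    Matrix (Fin N → Fin 2) (Fin N → Fin 2) ℂ :=
  Mstate N (p • ![-h, (-1:ℝ)^(N/2) * h, -1] + q • ![-h, (-1:ℝ)^(N/2), -h]
    + (1 - p - q) • ![(-1:ℝ), (-1:ℝ)^(N/2) * h, -h])

namespace Aux

variable (N : ℕ)

noncomputable def genKron (F : Fin N → Matrix (Fin 2) (Fin 2) ℂ) :
    Matrix (Fin N → Fin 2) (Fin N → Fin 2) ℂ :=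
  Matrix.of fun i j => ∏ k, F k (i k) (j k)

lemma kronPow_eq (A : Matrix (Fin 2) (Fin 2) ℂ) : kronPow A N = genKron N (fun _ => A) := rfl

lemma genKron_mul (F G : Fin N → Matrix (Fin 2) (Fin 2) ℂ) :
    genKron N F * genKron N G = genKron N (fun k => F k * G k) := by
  ext i j
  simp only [genKron, Matrix.mul_apply, Matrix.of_apply]
  rw [Finset.prod_univ_sum]
  simp [Fintype.piFinset_univ, ← Finset.prod_mul_distrib]

lemma genKron_one : genKron N (fun _ => 1) = 1 := by
  ext i j
  simp only [genKron, Matrix.of_apply, Matrix.one_apply]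
  rw [Finset.prod_boole]
  simp [funext_iff]

lemma genKron_conjT (F : Fin N → Matrix (Fin 2) (Fin 2) ℂ) :
    (genKron N F)ᴴ = genKron N (fun k => (F k)ᴴ) := by
  ext i j
  simp [genKron, Matrix.conjTranspose_apply, map_prod]

lemma genKron_update_smul (F : Fin N → Matrix (Fin 2) (Fin 2) ℂ) (k : Fin N) (c : ℂ)
    (A : Matrix (Fin 2) (Fin 2) ℂ) :
    genKron N (Function.update F k (c • A)) = c • genKron N (Function.update F k A) := by
  ext i j
  simp only [genKron, Matrix.of_apply, Matrix.smul_apply, smul_eq_mul]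
  rw [← Finset.mul_prod_erase _ _ (Finset.mem_univ k), ← Finset.mul_prod_erase _ _ (Finset.mem_univ k)]
  have he : ∀ l ∈ Finset.univ.erase k,
      Function.update F k (c • A) l (i l) (j l) = Function.update F k A l (i l) (j l) := by
    intro l hl
    rw [Function.update_of_ne (Finset.ne_of_mem_erase hl),
      Function.update_of_ne (Finset.ne_of_mem_erase hl)]
  rw [Finset.prod_congr rfl he, Function.update_self, Function.update_self, Matrix.smul_apply,
    smul_eq_mul]
  ring

lemma genKron_const_smul (c : ℂ) (A : Matrix (Fin 2) (Fin 2) ℂ) :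
    genKron N (fun _ => c • A) = c ^ N • genKron N (fun _ => A) := by
  ext i j
  simp [genKron, Finset.prod_mul_distrib, Finset.prod_const, Finset.card_univ]

end Aux

namespace Aux

-- 2x2 Pauli facts
lemma p00 : pauli 0 * pauli 0 = 1 := by
  ext i j; fin_cases i <;> fin_cases j <;>
    simp [pauli, Matrix.mul_apply, Fin.sum_univ_two, Matrix.one_apply]

lemma p11 : pauli 1 * pauli 1 = 1 := by
  ext i j; fin_cases i <;> fin_cases j <;>
    simp [pauli, Matrix.mul_apply, Fin.sum_univ_two, Matrix.one_apply]

lemma p22 : pauli 2 * pauli 2 = 1 := by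
  ext i j; fin_cases i <;> fin_cases j <;>
    simp [pauli, Matrix.mul_apply, Fin.sum_univ_two, Matrix.one_apply]

lemma p01 : pauli 0 * pauli 1 = Complex.I • pauli 2 := by
  ext i j; fin_cases i <;> fin_cases j <;>
    simp [pauli, Matrix.mul_apply, Fin.sum_univ_two]

lemma p10 : pauli 1 * pauli 0 = (-Complex.I) • pauli 2 := by
  ext i j; fin_cases i <;> fin_cases j <;>
    simp [pauli, Matrix.mul_apply, Fin.sum_univ_two]

lemma p10' : pauli 1 * pauli 0 = (-1 : ℂ) • (pauli 0 * pauli 1) := by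
  rw [p01, p10, smul_smul]; norm_num

lemma p20 : pauli 2 * pauli 0 = (-1 : ℂ) • (pauli 0 * pauli 2) := by
  ext i j; fin_cases i <;> fin_cases j <;>
    simp [pauli, Matrix.mul_apply, Fin.sum_univ_two]

lemma p21 : pauli 2 * pauli 1 = (-1 : ℂ) • (pauli 1 * pauli 2) := by
  ext i j; fin_cases i <;> fin_cases j <;>
    simp [pauli, Matrix.mul_apply, Fin.sum_univ_two]

lemma p0H : (pauli 0)ᴴ = pauli 0 := by
  ext i j; fin_cases i <;> fin_cases j <;> simp [pauli]

lemma p1H : (pauli 1)ᴴ = pauli 1 := by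
  ext i j; fin_cases i <;> fin_cases j <;> simp [pauli]

lemma p2H : (pauli 2)ᴴ = pauli 2 := by
  ext i j; fin_cases i <;> fin_cases j <;> simp [pauli]

variable (N : ℕ)

/-- the sign (−1)^{N/2} as a real number -/
noncomputable def eps : ℝ := (-1 : ℝ) ^ (N / 2)

lemma eps_sq : eps N * eps N = 1 := by
  rw [eps, ← pow_add, ← two_mul, pow_mul]; norm_num

noncomputable def Xm : Matrix (Fin N → Fin 2) (Fin N → Fin 2) ℂ := kronPow (pauli 0) N
noncomputable def Ym : Matrix (Fin N → Fin 2) (Fin N → Fin 2) ℂ := kronPow (pauli 1) N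
noncomputable def Zm : Matrix (Fin N → Fin 2) (Fin N → Fin 2) ℂ := kronPow (pauli 2) N
noncomputable def Yp : Matrix (Fin N → Fin 2) (Fin N → Fin 2) ℂ := ((eps N : ℝ) : ℂ) • Ym N

lemma XX : Xm N * Xm N = 1 := by
  rw [Xm, kronPow_eq, genKron_mul]
  simp only [p00]
  exact genKron_one N

lemma YY : Ym N * Ym N = 1 := by
  rw [Ym, kronPow_eq, genKron_mul]
  simp only [p11]
  exact genKron_one N

lemma I_pow_even (hN : Even N) : Complex.I ^ N = ((eps N : ℝ) : ℂ) := by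
  obtain ⟨m, hm⟩ := hN
  subst hm
  rw [← two_mul, pow_mul]
  norm_num [eps, Nat.mul_div_cancel_left]

lemma XY (hN : Even N) : Xm N * Ym N = ((eps N : ℝ) : ℂ) • Zm N := by
  rw [Xm, Ym, Zm, kronPow_eq, kronPow_eq, kronPow_eq, genKron_mul]
  simp only [p01]
  rw [genKron_const_smul, I_pow_even N hN]

lemma YX (hN : Even N) : Ym N * Xm N = ((eps N : ℝ) : ℂ) • Zm N := by
  rw [Xm, Ym, Zm, kronPow_eq, kronPow_eq, kronPow_eq, genKron_mul]
  simp only [p10]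
  rw [genKron_const_smul]
  congr 1
  rw [neg_pow, I_pow_even N hN]
  obtain ⟨m, hm⟩ := hN
  subst hm
  simp [← two_mul, pow_mul]

lemma epsC_sq : ((eps N : ℝ) : ℂ) * ((eps N : ℝ) : ℂ) = 1 := by
  rw [← Complex.ofReal_mul, eps_sq]; norm_num

lemma YpYp (hN : Even N) : Yp N * Yp N = 1 := by
  rw [Yp, smul_mul_assoc, mul_smul_comm, smul_smul, epsC_sq, one_smul, YY]

lemma comXY (hN : Even N) : Yp N * Xm N = Xm N * Yp N := by
  rw [Yp, smul_mul_assoc, mul_smul_comm, XY N hN, YX N hN]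

lemma Zm_eq (hN : Even N) : Zm N = Xm N * Yp N := by
  rw [Yp, mul_smul_comm, XY N hN, smul_smul, epsC_sq, one_smul]

lemma XmH : (Xm N)ᴴ = Xm N := by
  rw [Xm, kronPow_eq, genKron_conjT]; simp only [p0H]

lemma YpH : (Yp N)ᴴ = Yp N := by
  rw [Yp, Matrix.conjTranspose_smul, Ym, kronPow_eq, genKron_conjT]
  simp only [p1H]
  congr 1
  exact Complex.conj_ofReal _

lemma XYpH (hN : Even N) : (Xm N * Yp N)ᴴ = Xm N * Yp N := by
  rw [Matrix.conjTranspose_mul, XmH, YpH, comXY N hN]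

end Aux

namespace Aux

variable (N : ℕ)

/-- element of the abelian algebra spanned by 1, X, Y', XY' with real coefficients -/
noncomputable def eltR (a b c d : ℝ) : Matrix (Fin N → Fin 2) (Fin N → Fin 2) ℂ :=
  (a : ℂ) • 1 + (b : ℂ) • Xm N + (c : ℂ) • Yp N + (d : ℂ) • (Xm N * Yp N)

section EvenN
variable (hN : Even N)

lemma m2 : Xm N * (Xm N * Yp N) = Yp N := by rw [← mul_assoc, XX, one_mul]
lemma m3 (hN : Even N) : Yp N * (Xm N * Yp N) = Xm N := by
  rw [← mul_assoc, comXY N hN, mul_assoc, YpYp N hN, mul_one]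
lemma m4 (hN : Even N) : (Xm N * Yp N) * Xm N = Yp N := by
  rw [mul_assoc, comXY N hN, ← mul_assoc, XX, one_mul]
lemma m5 (hN : Even N) : (Xm N * Yp N) * Yp N = Xm N := by
  rw [mul_assoc, YpYp N hN, mul_one]
lemma m6 (hN : Even N) : (Xm N * Yp N) * (Xm N * Yp N) = 1 := by
  rw [mul_assoc, m3 N hN, XX]

lemma eltR_mul (hN : Even N) (a b c d a' b' c' d' : ℝ) :
    eltR N a b c d * eltR N a' b' c' d'
      = eltR N (a*a' + b*b' + c*c' + d*d') (a*b' + b*a' + c*d' + d*c')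
          (a*c' + c*a' + b*d' + d*b') (a*d' + d*a' + b*c' + c*b') := by
  simp only [eltR, add_mul, mul_add, smul_mul_assoc, mul_smul_comm, smul_smul, one_mul, mul_one,
    XX, YpYp N hN, comXY N hN, m2, m3 N hN, m4 N hN, m5 N hN, m6 N hN]
  match_scalars <;> push_cast <;> ring

lemma eltR_conjT (hN : Even N) (a b c d : ℝ) :
    (eltR N a b c d)ᴴ = eltR N a b c d := by
  simp only [eltR, Matrix.conjTranspose_add, Matrix.conjTranspose_smul, Matrix.conjTranspose_one,
    XmH, YpH, XYpH N hN, Complex.star_def, Complex.conj_ofReal]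

lemma eltR_add (a b c d a' b' c' d' : ℝ) :
    eltR N a b c d + eltR N a' b' c' d' = eltR N (a+a') (b+b') (c+c') (d+d') := by
  simp only [eltR]
  match_scalars <;> push_cast <;> ring

lemma eltR_smul (r : ℝ) (a b c d : ℝ) :
    ((r : ℝ) : ℂ) • eltR N a b c d = eltR N (r*a) (r*b) (r*c) (r*d) := by
  simp only [eltR, smul_add, smul_smul]
  match_scalars <;> push_cast <;> ring

lemma eltR_one : eltR N 1 0 0 0 = 1 := by
  simp [eltR]

end EvenN

end Aux

namespace Aux

variable (N : ℕ) (i : Fin N)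

/-- single-qubit operator A at position i -/
noncomputable def emb (A : Matrix (Fin 2) (Fin 2) ℂ) :
    Matrix (Fin N → Fin 2) (Fin N → Fin 2) ℂ :=
  genKron N (Function.update (fun _ => 1) i A)

lemma emb_mul (A B : Matrix (Fin 2) (Fin 2) ℂ) : emb N i A * emb N i B = emb N i (A * B) := by
  rw [emb, emb, emb, genKron_mul]
  have hfe : (fun k => Function.update (fun _ => (1:Matrix (Fin 2) (Fin 2) ℂ)) i A k
      * Function.update (fun _ => (1:Matrix (Fin 2) (Fin 2) ℂ)) i B k)
      = Function.update (fun _ => (1:Matrix (Fin 2) (Fin 2) ℂ)) i (A * B) := by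
    funext k
    by_cases hk : k = i
    · subst hk; simp
    · simp [Function.update_of_ne hk]
  rw [hfe]

lemma emb_one : emb N i 1 = 1 := by
  rw [emb, Function.update_eq_self_iff.mpr rfl]
  exact genKron_one N

lemma emb_conjT (A : Matrix (Fin 2) (Fin 2) ℂ) : (emb N i A)ᴴ = emb N i Aᴴ := by
  rw [emb, genKron_conjT, emb]
  have hfe : (fun k => (Function.update (fun _ => (1:Matrix (Fin 2) (Fin 2) ℂ)) i A k)ᴴ)
      = Function.update (fun _ => (1:Matrix (Fin 2) (Fin 2) ℂ)) i Aᴴ := by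
    funext k
    by_cases hk : k = i
    · subst hk; simp
    · simp [Function.update_of_ne hk]
  rw [hfe]

/-- emb commutes or anticommutes with kron powers according to 2x2 relation -/
lemma emb_mul_kron (A B : Matrix (Fin 2) (Fin 2) ℂ) :
    emb N i A * kronPow B N = genKron N (Function.update (fun _ => B) i (A * B)) := by
  rw [emb, kronPow_eq, genKron_mul]
  have hfe : (fun k => Function.update (fun _ => (1:Matrix (Fin 2) (Fin 2) ℂ)) i A k * B)
      = Function.update (fun _ => B) i (A * B) := by
    funext k
    by_cases hk : k = i
    · subst hk; simp
    · simp [Function.update_of_ne hk]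
  rw [hfe]

lemma kron_mul_emb (A B : Matrix (Fin 2) (Fin 2) ℂ) :
    kronPow B N * emb N i A = genKron N (Function.update (fun _ => B) i (B * A)) := by
  rw [emb, kronPow_eq, genKron_mul]
  have hfe : (fun k => B * Function.update (fun _ => (1:Matrix (Fin 2) (Fin 2) ℂ)) i A k)
      = Function.update (fun _ => B) i (B * A) := by
    funext k
    by_cases hk : k = i
    · subst hk; simp
    · simp [Function.update_of_ne hk]
  rw [hfe]

/-- anticommutation transfer: if A*B = -(B*A) then emb A anticommutes with kronPow B -/
lemma emb_anticomm {A B : Matrix (Fin 2) (Fin 2) ℂ} (hAB : A * B = (-1 : ℂ) • (B * A)) :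
    emb N i A * kronPow B N = (-1 : ℂ) • (kronPow B N * emb N i A) := by
  rw [emb_mul_kron, kron_mul_emb, hAB, genKron_update_smul]

lemma emb_comm {A B : Matrix (Fin 2) (Fin 2) ℂ} (hAB : A * B = B * A) :
    emb N i A * kronPow B N = kronPow B N * emb N i A := by
  rw [emb_mul_kron, kron_mul_emb, hAB]

noncomputable def W2 : Matrix (Fin N → Fin 2) (Fin N → Fin 2) ℂ := emb N i (pauli 0)
noncomputable def W3 : Matrix (Fin N → Fin 2) (Fin N → Fin 2) ℂ := emb N i (pauli 2)

lemma W2_sq : W2 N i * W2 N i = 1 := by rw [W2, emb_mul, p00, emb_one]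
lemma W3_sq : W3 N i * W3 N i = 1 := by rw [W3, emb_mul, p22, emb_one]
lemma W2_H : (W2 N i)ᴴ = W2 N i := by rw [W2, emb_conjT, p0H]
lemma W3_H : (W3 N i)ᴴ = W3 N i := by rw [W3, emb_conjT, p2H]

lemma W2_X : W2 N i * Xm N = Xm N * W2 N i := by
  rw [W2, Xm]; exact emb_comm N i rfl
lemma W2_Yp : W2 N i * Yp N = (-1 : ℂ) • (Yp N * W2 N i) := by
  rw [W2, Yp, mul_smul_comm, smul_mul_assoc, smul_comm]
  congr 1
  rw [Ym]; exact emb_anticomm N i (by rw [p01, p10, smul_smul]; norm_num)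
lemma W3_X : W3 N i * Xm N = (-1 : ℂ) • (Xm N * W3 N i) := by
  rw [W3, Xm]; exact emb_anticomm N i p20
lemma W3_Yp : W3 N i * Yp N = (-1 : ℂ) • (Yp N * W3 N i) := by
  rw [W3, Yp, mul_smul_comm, smul_mul_assoc, smul_comm]
  congr 1
  rw [Ym]; exact emb_anticomm N i p21

section EvenW
variable (hN : Even N)

-- conjugation of atoms
lemma W2_conj_X : W2 N i * Xm N * W2 N i = Xm N := by
  rw [W2_X, mul_assoc, W2_sq, mul_one]
lemma W2_conj_Yp : W2 N i * Yp N * W2 N i = (-1 : ℂ) • Yp N := by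
  rw [W2_Yp, smul_mul_assoc, mul_assoc, W2_sq, mul_one]
lemma W2_conj_XYp : W2 N i * (Xm N * Yp N) * W2 N i = (-1 : ℂ) • (Xm N * Yp N) := by
  rw [← mul_assoc, W2_X, mul_assoc (Xm N), W2_Yp, mul_smul_comm, smul_mul_assoc,
    ← mul_assoc, mul_assoc (Xm N * Yp N), W2_sq, mul_one]
lemma W3_conj_X : W3 N i * Xm N * W3 N i = (-1 : ℂ) • Xm N := by
  rw [W3_X, smul_mul_assoc, mul_assoc, W3_sq, mul_one]
lemma W3_conj_Yp : W3 N i * Yp N * W3 N i = (-1 : ℂ) • Yp N := by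
  rw [W3_Yp, smul_mul_assoc, mul_assoc, W3_sq, mul_one]
lemma W3_conj_XYp : W3 N i * (Xm N * Yp N) * W3 N i = Xm N * Yp N := by
  rw [← mul_assoc, W3_X, smul_mul_assoc, smul_mul_assoc, mul_assoc (Xm N), W3_Yp,
    mul_smul_comm, smul_mul_assoc, smul_smul, ← mul_assoc, mul_assoc (Xm N * Yp N), W3_sq, mul_one]
  norm_num

lemma W2_conj_eltR (a b c d : ℝ) :
    W2 N i * eltR N a b c d * W2 N i = eltR N a b (-c) (-d) := by
  simp only [eltR, mul_add, add_mul, mul_smul_comm, smul_mul_assoc, mul_one, one_mul]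
  rw [show W2 N i * W2 N i = 1 from W2_sq N i,
    show W2 N i * Xm N * W2 N i = Xm N from W2_conj_X N i,
    show W2 N i * Yp N * W2 N i = (-1:ℂ) • Yp N from W2_conj_Yp N i,
    show W2 N i * (Xm N * Yp N) * W2 N i = (-1:ℂ) • (Xm N * Yp N) from W2_conj_XYp N i]
  match_scalars <;> push_cast <;> ring

lemma W3_conj_eltR (a b c d : ℝ) :
    W3 N i * eltR N a b c d * W3 N i = eltR N a (-b) (-c) d := by
  simp only [eltR, mul_add, add_mul, mul_smul_comm, smul_mul_assoc, mul_one, one_mul]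
  rw [show W3 N i * W3 N i = 1 from W3_sq N i,
    show W3 N i * Xm N * W3 N i = (-1:ℂ) • Xm N from W3_conj_X N i,
    show W3 N i * Yp N * W3 N i = (-1:ℂ) • Yp N from W3_conj_Yp N i,
    show W3 N i * (Xm N * Yp N) * W3 N i = Xm N * Yp N from W3_conj_XYp N i]
  match_scalars <;> push_cast <;> ring

end EvenW

end Aux

namespace Aux

variable (N : ℕ) (i : Fin N)

lemma eltR_congr {a b c d a' b' c' d' : ℝ} (h1 : a = a') (h2 : b = b') (h3 : c = c')
    (h4 : d = d') : eltR N a b c d = eltR N a' b' c' d' := by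
  subst h1; subst h2; subst h3; subst h4; rfl

/-- signs of the three "moving" blocks -/
noncomputable def sx : Fin 3 → ℝ := ![1, 1, -1]
noncomputable def su : Fin 3 → ℝ := ![1, -1, -1]

noncomputable def Wm : Fin 3 → Matrix (Fin N → Fin 2) (Fin N → Fin 2) ℂ :=
  ![1, W2 N i, W3 N i]

noncomputable def Qm (b : Fin 3) : Matrix (Fin N → Fin 2) (Fin N → Fin 2) ℂ :=
  eltR N (1/4) (sx b / 4) (su b / 4) (sx b * su b / 4)

noncomputable def Q0 : Matrix (Fin N → Fin 2) (Fin N → Fin 2) ℂ :=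
  eltR N (1/4) (-(1/4)) (1/4) (-(1/4))

lemma Wm_sq (b : Fin 3) : Wm N i b * Wm N i b = 1 := by
  fin_cases b <;> simp [Wm, W2_sq, W3_sq]

lemma Wm_H (b : Fin 3) : (Wm N i b)ᴴ = Wm N i b := by
  fin_cases b <;> simp [Wm, W2_H, W3_H]

section Even2

lemma Qm_H (hN : Even N) (b : Fin 3) : (Qm N b)ᴴ = Qm N b := eltR_conjT N hN _ _ _ _

lemma Q0_H (hN : Even N) : (Q0 N)ᴴ = Q0 N := eltR_conjT N hN _ _ _ _

lemma Wm_conj (hN : Even N) (b : Fin 3) (a1 a2 a3 a4 : ℝ) :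
    Wm N i b * eltR N a1 a2 a3 a4 * Wm N i b
      = eltR N a1 (sx b * a2) (su b * a3) (sx b * su b * a4) := by
  fin_cases b <;>
    simp [Wm, sx, su, W2_conj_eltR N i, W3_conj_eltR N i]

lemma QsandQ (hN : Even N) (b : Fin 3) (x1 x2 x3 x4 : ℝ) :
    Qm N b * eltR N x1 x2 x3 x4 * Qm N b
      = eltR N ((x1 + sx b * x2 + su b * x3 + sx b * su b * x4)/4)
          (sx b * (x1 + sx b * x2 + su b * x3 + sx b * su b * x4)/4)
          (su b * (x1 + sx b * x2 + su b * x3 + sx b * su b * x4)/4)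
          (sx b * su b * (x1 + sx b * x2 + su b * x3 + sx b * su b * x4)/4) := by
  rw [Qm, eltR_mul N hN, eltR_mul N hN]
  apply eltR_congr <;> fin_cases b <;> norm_num [sx, su] <;> ring

lemma Q0sand (hN : Even N) (x1 x2 x3 x4 : ℝ) :
    Q0 N * eltR N x1 x2 x3 x4 * Q0 N
      = eltR N ((x1 - x2 + x3 - x4)/4) (-((x1 - x2 + x3 - x4)/4))
          ((x1 - x2 + x3 - x4)/4) (-((x1 - x2 + x3 - x4)/4)) := by
  rw [Q0, eltR_mul N hN, eltR_mul N hN]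
  apply eltR_congr <;> ring

lemma Qm_idem (hN : Even N) (b : Fin 3) : Qm N b * Qm N b = Qm N b := by
  rw [Qm, eltR_mul N hN]
  apply eltR_congr <;> fin_cases b <;> norm_num [sx, su]

lemma Q0_idem (hN : Even N) : Q0 N * Q0 N = Q0 N := by
  rw [Q0, eltR_mul N hN]
  apply eltR_congr <;> ring

end Even2

end Aux

namespace Aux

variable (N : ℕ) (i : Fin N)

lemma Mstate_eltR (hN : Even N) (c : Fin 3 → ℝ) :
    Mstate N c = eltR N ((2:ℝ)^N)⁻¹ (((2:ℝ)^N)⁻¹ * c 0)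
      (((2:ℝ)^N)⁻¹ * (eps N * c 1)) (((2:ℝ)^N)⁻¹ * c 2) := by
  rw [Mstate, Fin.sum_univ_three]
  rw [show kronPow (pauli 0) N = Xm N from rfl, show kronPow (pauli 1) N = Ym N from rfl,
    show kronPow (pauli 2) N = Zm N from rfl]
  rw [show Ym N = ((eps N : ℝ) : ℂ) • Yp N from by
      rw [Yp, smul_smul, epsC_sq, one_smul], Zm_eq N hN]
  simp only [eltR, smul_smul, smul_add, mul_smul_comm, smul_mul_assoc]
  match_scalars <;> push_cast <;> ring

lemma omega_eltR (hN : Even N) (p q h : ℝ) :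
    omegaState N p q h = eltR N ((2:ℝ)^N)⁻¹
      (((2:ℝ)^N)⁻¹ * (-((p+q)*h) - (1-p-q)))
      (((2:ℝ)^N)⁻¹ * (q + (p + (1-p-q))*h))
      (((2:ℝ)^N)⁻¹ * (-p - (q + (1-p-q))*h)) := by
  rw [omegaState, Mstate_eltR N hN]
  apply eltR_congr
  · rfl
  · simp only [Pi.add_apply, Pi.smul_apply, Matrix.cons_val_zero, smul_eq_mul]
    ring
  · simp only [Pi.add_apply, Pi.smul_apply, Matrix.cons_val_one, Matrix.head_cons, Matrix.cons_val_zero, smul_eq_mul]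
    rw [show (-1:ℝ)^(N/2) = eps N from rfl]
    linear_combination (((2:ℝ)^N)⁻¹ * (p*h + q + (1-p-q)*h)) * eps_sq N
  · simp only [Pi.add_apply, Pi.smul_apply, Matrix.cons_val_two, Matrix.tail_cons,
      Matrix.head_cons, smul_eq_mul]
    ring

noncomputable def kraus (aa : Fin 3 → ℝ) (b' b : Fin 3) :
    Matrix (Fin N → Fin 2) (Fin N → Fin 2) ℂ :=
  (Real.sqrt (aa b') : ℂ) • (Wm N i b' * (Wm N i b * Qm N b))

variable (aa : Fin 3 → ℝ)

lemma kraus_conjT (hN : Even N) (b' b : Fin 3) :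
    (kraus N i aa b' b)ᴴ = (Real.sqrt (aa b') : ℂ) • ((Qm N b * Wm N i b) * Wm N i b') := by
  rw [kraus, Matrix.conjTranspose_smul, Matrix.conjTranspose_mul, Matrix.conjTranspose_mul,
    Wm_H, Wm_H, Qm_H N hN]
  congr 1
  simp [Complex.star_def, Complex.conj_ofReal]

lemma kraus_kraus (hN : Even N) (b' b : Fin 3) (hb' : 0 ≤ aa b') :
    (kraus N i aa b' b)ᴴ * kraus N i aa b' b = ((aa b' : ℝ) : ℂ) • Qm N b := by
  rw [kraus_conjT N i aa hN, kraus, smul_mul_assoc, mul_smul_comm, smul_smul,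
    ← Complex.ofReal_mul, Real.mul_self_sqrt hb']
  congr 1
  rw [show ((Qm N b * Wm N i b) * Wm N i b') * (Wm N i b' * (Wm N i b * Qm N b))
      = Qm N b * (Wm N i b * (Wm N i b' * (Wm N i b' * (Wm N i b * Qm N b)))) from by
    simp only [mul_assoc]]
  rw [← mul_assoc (Wm N i b') (Wm N i b'), Wm_sq, one_mul, ← mul_assoc (Wm N i b) (Wm N i b),
    Wm_sq, one_mul, Qm_idem N hN]

lemma kraus_sand (hN : Even N) (b' b : Fin 3) (hb' : 0 ≤ aa b') (x1 x2 x3 x4 : ℝ) :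
    kraus N i aa b' b * eltR N x1 x2 x3 x4 * (kraus N i aa b' b)ᴴ
      = eltR N (aa b' * ((x1 + sx b * x2 + su b * x3 + sx b * su b * x4)/4))
          (aa b' * (sx b' * ((x1 + sx b * x2 + su b * x3 + sx b * su b * x4)/4)))
          (aa b' * (su b' * ((x1 + sx b * x2 + su b * x3 + sx b * su b * x4)/4)))
          (aa b' * (sx b' * su b' * ((x1 + sx b * x2 + su b * x3 + sx b * su b * x4)/4))) := by
  rw [kraus_conjT N i aa hN, kraus, smul_mul_assoc, smul_mul_assoc, mul_smul_comm, smul_smul,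
    ← Complex.ofReal_mul, Real.mul_self_sqrt hb']
  rw [show (Wm N i b' * (Wm N i b * Qm N b)) * eltR N x1 x2 x3 x4 * ((Qm N b * Wm N i b) * Wm N i b')
      = Wm N i b' * ((Wm N i b * (Qm N b * eltR N x1 x2 x3 x4 * Qm N b)) * Wm N i b) * Wm N i b' from by
    simp only [mul_assoc]]
  rw [QsandQ N hN, Wm_conj N i hN, Wm_conj N i hN, eltR_smul]
  apply eltR_congr <;> fin_cases b <;> fin_cases b' <;> norm_num [sx, su] <;> ring

end Aux

namespace Aux

lemma channel (N : ℕ) (i : Fin N) (hN : Even N) (a1 a2 : ℝ)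
    (h1 : 0 ≤ a1) (h2 : 0 ≤ a2) (h3 : a1 + a2 ≤ 1) :
    ∃ Φ, IsQuantumChannel N Φ ∧ ∀ p q h : ℝ, Φ (omegaState N p q h) = omegaState N a2 a1 h := by
  set aa : Fin 3 → ℝ := ![a1, a2, 1 - a1 - a2] with haa_def
  have haa : ∀ b, 0 ≤ aa b := by
    intro b
    fin_cases b <;> simp [aa] <;> linarith
  set A : Fin 10 → Matrix (Fin N → Fin 2) (Fin N → Fin 2) ℂ :=
    ![kraus N i aa 0 0, kraus N i aa 0 1, kraus N i aa 0 2,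
      kraus N i aa 1 0, kraus N i aa 1 1, kraus N i aa 1 2,
      kraus N i aa 2 0, kraus N i aa 2 1, kraus N i aa 2 2, Q0 N] with hA_def
  refine ⟨fun ρ => ∑ t, A t * ρ * (A t)ᴴ, ⟨10, A, ?_, fun ρ => rfl⟩, ?_⟩
  · -- Kraus completeness
    simp only [hA_def, Fin.sum_univ_succ, Finset.univ_eq_empty, Finset.sum_empty,
      Matrix.cons_val_zero, Matrix.cons_val_succ, add_zero]
    rw [kraus_kraus N i aa hN _ _ (haa 0), kraus_kraus N i aa hN _ _ (haa 0),
      kraus_kraus N i aa hN _ _ (haa 0), kraus_kraus N i aa hN _ _ (haa 1),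
      kraus_kraus N i aa hN _ _ (haa 1), kraus_kraus N i aa hN _ _ (haa 1),
      kraus_kraus N i aa hN _ _ (haa 2), kraus_kraus N i aa hN _ _ (haa 2),
      kraus_kraus N i aa hN _ _ (haa 2), Q0_H N hN, Q0_idem N hN]
    simp only [Qm, Q0, eltR_smul]
    rw [eltR_add, eltR_add, eltR_add, eltR_add, eltR_add, eltR_add, eltR_add, eltR_add,
      eltR_add, ← eltR_one N]
    apply eltR_congr <;> norm_num [aa, sx, su, Matrix.cons_val_two, Matrix.tail_cons, Matrix.head_cons] <;> ring
  · intro p q h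
    simp only [hA_def, Fin.sum_univ_succ, Finset.univ_eq_empty, Finset.sum_empty,
      Matrix.cons_val_zero, Matrix.cons_val_succ, add_zero]
    rw [omega_eltR N hN]
    rw [kraus_sand N i aa hN 0 0 (haa 0), kraus_sand N i aa hN 0 1 (haa 0),
      kraus_sand N i aa hN 0 2 (haa 0), kraus_sand N i aa hN 1 0 (haa 1),
      kraus_sand N i aa hN 1 1 (haa 1), kraus_sand N i aa hN 1 2 (haa 1),
      kraus_sand N i aa hN 2 0 (haa 2), kraus_sand N i aa hN 2 1 (haa 2),
      kraus_sand N i aa hN 2 2 (haa 2), Q0_H N hN, Q0sand N hN]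
    rw [eltR_add, eltR_add, eltR_add, eltR_add, eltR_add, eltR_add, eltR_add, eltR_add,
      eltR_add, omega_eltR N hN a2 a1 h]
    apply eltR_congr <;> norm_num [aa, sx, su, Matrix.cons_val_two, Matrix.tail_cons, Matrix.head_cons] <;> ring

end Aux


theorem stmt16 (N : ℕ) (hN : Even N) (hN2 : 2 ≤ N)
    (D : Matrix (Fin N → Fin 2) (Fin N → Fin 2) ℂ → Matrix (Fin N → Fin 2) (Fin N → Fin 2) ℂ → ℝ)
    (hD : Contractive N D)
    (p q h : ℝ) (hp : p ∈ Set.Icc (0:ℝ) 1) (hq : q ∈ Set.Icc (0:ℝ) 1) (hpq : p + q ≤ 1)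
    (hh : h ∈ Set.Ico (0:ℝ) 1) :
    D (omegaState N p q h) (omegaState N p q 0)
      = D (omegaState N (1/3) (1/3) h) (omegaState N (1/3) (1/3) 0) := by
  have hNpos : 0 < N := by omega
  set i : Fin N := ⟨0, hNpos⟩
  obtain ⟨Φ₁, hc1, hact1⟩ := Aux.channel N i hN (1/3) (1/3) (by norm_num) (by norm_num)
    (by norm_num)
  obtain ⟨Φ₂, hc2, hact2⟩ := Aux.channel N i hN q p hq.1 hp.1 (by linarith)
  apply le_antisymm
  · have e1 : omegaState N p q h = Φ₂ (omegaState N (1/3) (1/3) h) := (hact2 (1/3) (1/3) h).symm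
    have e2 : omegaState N p q 0 = Φ₂ (omegaState N (1/3) (1/3) 0) := (hact2 (1/3) (1/3) 0).symm
    rw [e1, e2]
    exact hD Φ₂ hc2 _ _
  · have e1 : omegaState N (1/3) (1/3) h = Φ₁ (omegaState N p q h) := (hact1 p q h).symm
    have e2 : omegaState N (1/3) (1/3) 0 = Φ₁ (omegaState N p q 0) := (hact1 p q 0).symm
    rw [e1, e2]
    exact hD Φ₁ hc1 _ _
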